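/- Let M be an invertible m×m matrix over F₂ and let G = T₂ ⊗ M (so G has block form ((M,0),(M,M)), with rows 0,…,m−1 forming the upper half and rows m,…,2m−1 the lower half). Let I ⊆ {0,…,2m−1} be nonempty, let a = |I ∩ {0,…,m−1}| and b = |I ∩ {m,…,2m−1}|. Then: if a ≥ 1 then d_G(I) ≤ S_M(a), and if b ≥ 1 then d_G(I) ≤ 2·S_M(b). -/

import Mathlib

open Matrix

noncomputable section

abbrev F2 : Type := ZMod 2

/-- The Arikan kernel `T₂ = ((1,0),(1,1))` over `F₂`. -/
def T2 : Matrix (Fin 2) (Fin 2) F2 := !![1, 0; 1, 1]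

/-- Kronecker product of `Fin`-indexed square matrices, with the standard index
convention `(A ⊗ B) i j = A (i / n) (j / n) * B (i % n) (j % n)`. -/
def kron {m n : ℕ} (A : Matrix (Fin m) (Fin m) F2) (B : Matrix (Fin n) (Fin n) F2) :
    Matrix (Fin (m * n)) (Fin (m * n)) F2 :=
  fun i j => A i.divNat j.divNat * B i.modNat j.modNat

/-- The `n`-fold Kronecker power of `T₂` (with `T₂^{⊗0}` the 1×1 identity). -/
def T2pow : (n : ℕ) → Matrix (Fin (2 ^ n)) (Fin (2 ^ n)) F2
  | 0 => 1
  | n + 1 => (kron T2 (T2pow n)).submatrix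
      (Fin.cast (by rw [pow_succ, Nat.mul_comm]))
      (Fin.cast (by rw [pow_succ, Nat.mul_comm]))

/-- Minimum distance `d_G(I)`: the minimum Hamming weight of `u · G` over all
nonzero row vectors `u` with support contained in `I`. -/
def minDist {N : ℕ} (G : Matrix (Fin N) (Fin N) F2) (I : Finset (Fin N)) : ℕ :=
  sInf {w | ∃ u : Fin N → F2, u ≠ 0 ∧ (∀ i, u i ≠ 0 → i ∈ I) ∧
    hammingNorm (Matrix.vecMul u G) = w}

/-- Minimum-distance spectrum `S_G(K)`: the maximum of `d_G(I)` over all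
row-index sets `I` of size `K`. -/
def spec {N : ℕ} (G : Matrix (Fin N) (Fin N) F2) (K : ℕ) : ℕ :=
  sSup {d | ∃ I : Finset (Fin N), I.card = K ∧ minDist G I = d}

/-- `K`-th largest element (1-indexed, counted with multiplicity) of a
multiset of natural numbers. -/
def kthLargest (s : Multiset ℕ) (K : ℕ) : ℕ :=
  ((s.sort (· ≤ ·)).reverse).getD (K - 1) 0

lemma divNat_finProd {a b : ℕ} (d : Fin a) (x : Fin b) :
    (finProdFinEquiv (d, x)).divNat = d := by
  have h := finProdFinEquiv_symm_apply (m := a) (n := b) (x := finProdFinEquiv (d, x))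
  rw [Equiv.symm_apply_apply] at h
  exact (congrArg Prod.fst h).symm

lemma modNat_finProd {a b : ℕ} (d : Fin a) (x : Fin b) :
    (finProdFinEquiv (d, x)).modNat = x := by
  have h := finProdFinEquiv_symm_apply (m := a) (n := b) (x := finProdFinEquiv (d, x))
  rw [Equiv.symm_apply_apply] at h
  exact (congrArg Prod.snd h).symm

lemma finProd_divNat_modNat {a b : ℕ} (i : Fin (a * b)) :
    finProdFinEquiv (i.divNat, i.modNat) = i := by
  rw [← finProdFinEquiv_symm_apply, Equiv.apply_symm_apply]

lemma vecMul_block (m : ℕ) (M : Matrix (Fin m) (Fin m) F2) (d : Fin 2) (u : Fin m → F2) :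
    Matrix.vecMul (fun i : Fin (2 * m) => if i.divNat = d then u i.modNat else 0) (kron T2 M)
      = fun j => T2 d j.divNat * Matrix.vecMul u M j.modNat := by
  funext j
  simp only [vecMul, dotProduct, kron]
  rw [← Fintype.sum_equiv (finProdFinEquiv (m := 2) (n := m))
    (fun p : Fin 2 × Fin m => (if p.1 = d then u p.2 else 0) * (T2 p.1 j.divNat * M p.2 j.modNat))
    (fun i : Fin (2 * m) =>
      (if i.divNat = d then u i.modNat else 0) * (T2 i.divNat j.divNat * M i.modNat j.modNat))
    (fun p => by obtain ⟨pd, px⟩ := p; simp only [divNat_finProd, modNat_finProd])]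
  rw [Fintype.sum_prod_type]
  have h : ∀ p : Fin 2, (∑ q : Fin m, (if p = d then u q else 0) * (T2 p j.divNat * M q j.modNat))
      = if p = d then T2 d j.divNat * ∑ q : Fin m, u q * M q j.modNat else 0 := by
    intro p
    split
    · next hp => subst hp; rw [Finset.mul_sum]; exact Finset.sum_congr rfl (fun q _ => by ring)
    · simp
  rw [Finset.sum_congr rfl (fun p _ => h p), Finset.sum_ite_eq' Finset.univ d]
  simp

lemma hammingNorm_mul_block (m : ℕ) (c : Fin 2 → F2) (w : Fin m → F2) :
    hammingNorm (fun j : Fin (2 * m) => c j.divNat * w j.modNat)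
      = hammingNorm c * hammingNorm w := by
  classical
  simp only [hammingNorm, Finset.card_filter]
  rw [← Fintype.sum_equiv (finProdFinEquiv (m := 2) (n := m))
    (fun p : Fin 2 × Fin m => (if c p.1 ≠ 0 then 1 else 0) * (if w p.2 ≠ 0 then 1 else 0))
    (fun j : Fin (2 * m) => if c j.divNat * w j.modNat ≠ 0 then 1 else 0)
    (fun p => by
      obtain ⟨pd, px⟩ := p
      simp only [divNat_finProd, modNat_finProd]
      by_cases h1 : c pd = 0 <;> by_cases h2 : w px = 0 <;> simp [h1, h2])]
  rw [Fintype.sum_prod_type, Finset.sum_mul_sum]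

lemma hammingNorm_le_card {N : ℕ} (f : Fin N → F2) : hammingNorm f ≤ N := by
  classical
  refine (Finset.card_filter_le _ _).trans ?_
  simp

lemma minDist_le_N {N : ℕ} (G : Matrix (Fin N) (Fin N) F2) (I : Finset (Fin N)) :
    minDist G I ≤ N := by
  rw [minDist]
  rcases Set.eq_empty_or_nonempty {w | ∃ u : Fin N → F2, u ≠ 0 ∧ (∀ i, u i ≠ 0 → i ∈ I) ∧
      hammingNorm (Matrix.vecMul u G) = w} with h | ⟨w, hw⟩
  · rw [h, Nat.sInf_empty]; exact Nat.zero_le _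
  · have h4 := hw
    obtain ⟨u, h1, h2, h3⟩ := h4
    exact (Nat.sInf_le hw).trans (h3 ▸ hammingNorm_le_card _)

lemma minDist_le_spec {N : ℕ} (M : Matrix (Fin N) (Fin N) F2) (J : Finset (Fin N)) :
    minDist M J ≤ spec M J.card := by
  refine le_csSup ⟨N, fun w hw => ?_⟩ ⟨J, rfl, rfl⟩
  obtain ⟨I', -, rfl⟩ := hw
  exact minDist_le_N M I'

lemma minDist_le_block (m : ℕ) (M : Matrix (Fin m) (Fin m) F2)
    (I : Finset (Fin (2 * m))) (d : Fin 2) (J : Finset (Fin m)) (hJne : J.Nonempty)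
    (hJ : ∀ x ∈ J, finProdFinEquiv (d, x) ∈ I) :
    minDist (kron T2 M) I ≤ hammingNorm (T2 d) * minDist M J := by
  classical
  have hne : {w | ∃ u : Fin m → F2, u ≠ 0 ∧ (∀ i, u i ≠ 0 → i ∈ J) ∧
      hammingNorm (Matrix.vecMul u M) = w}.Nonempty := by
    obtain ⟨j0, hj0⟩ := hJne
    refine ⟨_, fun i => if i = j0 then 1 else 0, ?_, ?_, rfl⟩
    · intro h
      have := congrFun h j0
      simp at this
    · intro i hi
      by_cases h : i = j0
      · subst h; exact hj0
      · simp [h] at hi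
  have hmem := Nat.sInf_mem hne
  obtain ⟨u, hu0, husupp, hw⟩ := hmem
  set v : Fin (2 * m) → F2 := fun i => if i.divNat = d then u i.modNat else 0 with hv
  have key : minDist M J = sInf {w | ∃ u : Fin m → F2, u ≠ 0 ∧ (∀ i, u i ≠ 0 → i ∈ J) ∧
      hammingNorm (Matrix.vecMul u M) = w} := rfl
  refine Nat.sInf_le ⟨v, ?_, ?_, ?_⟩
  · obtain ⟨x, hx⟩ := Function.ne_iff.mp hu0
    intro h
    have hc := congrFun h (finProdFinEquiv (d, x))
    simp only [hv, divNat_finProd, modNat_finProd, if_pos rfl, Pi.zero_apply] at hc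
    exact hx hc
  · intro i hi
    simp only [hv] at hi
    by_cases hd : i.divNat = d
    · have hu : u i.modNat ≠ 0 := by simpa [hd] using hi
      have := hJ _ (husupp _ hu)
      rwa [← hd, finProd_divNat_modNat] at this
    · simp [hd] at hi
  · rw [hv, vecMul_block]
    have : (fun j : Fin (2 * m) => T2 d j.divNat * Matrix.vecMul u M j.modNat)
        = fun j : Fin (2 * m) => (T2 d) j.divNat * (Matrix.vecMul u M) j.modNat := rfl
    rw [this, hammingNorm_mul_block, hw, key]

lemma divNat_cases (m : ℕ) (hm : 0 < m) (i : Fin (2 * m)) :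
    (i.divNat = (0 : Fin 2) ↔ (i : ℕ) < m) ∧ (i.divNat = (1 : Fin 2) ↔ m ≤ (i : ℕ)) := by
  have h1 : (i.divNat : ℕ) = (i : ℕ) / m := rfl
  have h2 : (i : ℕ) < 2 * m := i.isLt
  have h3 : (i : ℕ) / m < 2 := (Nat.div_lt_iff_lt_mul hm).mpr (by omega)
  have h4 : m ≤ (i : ℕ) ↔ 1 ≤ (i : ℕ) / m := by
    rw [Nat.le_div_iff_mul_le hm, one_mul]
  have h5 : (i : ℕ) / m = 0 ↔ (i : ℕ) < m := by
    rw [Nat.div_eq_zero_iff]; constructor <;> intro h <;> omega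
  constructor
  · rw [Fin.ext_iff, h1]
    simpa using h5
  · rw [Fin.ext_iff, h1]
    simp only [Fin.val_one]
    omega

theorem minDist_kron_T2_upper_bounds
    (m : ℕ) (M : Matrix (Fin m) (Fin m) F2) (hM : IsUnit M)
    (I : Finset (Fin (2 * m))) (hI : I.Nonempty) :
    (1 ≤ (I.filter (fun i : Fin (2 * m) => (i : ℕ) < m)).card →
      minDist (kron T2 M) I ≤ spec M (I.filter (fun i : Fin (2 * m) => (i : ℕ) < m)).card) ∧
    (1 ≤ (I.filter (fun i : Fin (2 * m) => m ≤ (i : ℕ))).card →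
      minDist (kron T2 M) I ≤ 2 * spec M (I.filter (fun i : Fin (2 * m) => m ≤ (i : ℕ))).card) := by
  classical
  have hm : 0 < m := by
    obtain ⟨i, _⟩ := hI
    have := i.isLt
    omega
  constructor
  · intro h1
    set A := I.filter (fun i : Fin (2 * m) => (i : ℕ) < m) with hAdef
    have hdiv : ∀ i ∈ A, i.divNat = (0 : Fin 2) := fun i hi =>
      ((divNat_cases m hm i).1).mpr (Finset.mem_filter.mp hi).2
    have hinj : Set.InjOn (fun i : Fin (2 * m) => i.modNat) (A : Set (Fin (2 * m))) := by
      intro x hx y hy hxy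
      rw [← finProd_divNat_modNat x, ← finProd_divNat_modNat y,
        hdiv x (Finset.mem_coe.mp hx), hdiv y (Finset.mem_coe.mp hy)]
      simp only at hxy
      rw [hxy]
    set J := A.image (fun i : Fin (2 * m) => i.modNat) with hJdef
    have hcard : J.card = A.card := Finset.card_image_of_injOn hinj
    have hJne : J.Nonempty := by
      rw [← Finset.card_pos, hcard]
      exact h1
    have hsub : ∀ x ∈ J, finProdFinEquiv ((0 : Fin 2), x) ∈ I := by
      intro x hx
      obtain ⟨i, hi, rfl⟩ := Finset.mem_image.mp hx
      rw [← hdiv i hi, finProd_divNat_modNat]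
      exact (Finset.mem_filter.mp hi).1
    have hT : hammingNorm (T2 (0 : Fin 2)) = 1 := by decide
    calc minDist (kron T2 M) I ≤ hammingNorm (T2 (0 : Fin 2)) * minDist M J :=
          minDist_le_block m M I 0 J hJne hsub
      _ = minDist M J := by rw [hT, one_mul]
      _ ≤ spec M J.card := minDist_le_spec M J
      _ = spec M A.card := by rw [hcard]
  · intro h1
    set A := I.filter (fun i : Fin (2 * m) => m ≤ (i : ℕ)) with hAdef
    have hdiv : ∀ i ∈ A, i.divNat = (1 : Fin 2) := fun i hi =>
      ((divNat_cases m hm i).2).mpr (Finset.mem_filter.mp hi).2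
    have hinj : Set.InjOn (fun i : Fin (2 * m) => i.modNat) (A : Set (Fin (2 * m))) := by
      intro x hx y hy hxy
      rw [← finProd_divNat_modNat x, ← finProd_divNat_modNat y,
        hdiv x (Finset.mem_coe.mp hx), hdiv y (Finset.mem_coe.mp hy)]
      simp only at hxy
      rw [hxy]
    set J := A.image (fun i : Fin (2 * m) => i.modNat) with hJdef
    have hcard : J.card = A.card := Finset.card_image_of_injOn hinj
    have hJne : J.Nonempty := by
      rw [← Finset.card_pos, hcard]
      exact h1
    have hsub : ∀ x ∈ J, finProdFinEquiv ((1 : Fin 2), x) ∈ I := by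
      intro x hx
      obtain ⟨i, hi, rfl⟩ := Finset.mem_image.mp hx
      rw [← hdiv i hi, finProd_divNat_modNat]
      exact (Finset.mem_filter.mp hi).1
    have hT : hammingNorm (T2 (1 : Fin 2)) = 2 := by decide
    calc minDist (kron T2 M) I ≤ hammingNorm (T2 (1 : Fin 2)) * minDist M J :=
          minDist_le_block m M I 1 J hJne hsub
      _ = 2 * minDist M J := by rw [hT]
      _ ≤ 2 * spec M J.card := Nat.mul_le_mul_left 2 (minDist_le_spec M J)
      _ = 2 * spec M A.card := by rw [hcard]
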